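/- Consider the unit interval [0,1] as a bounded distributive lattice with d(a) = 1 − a (an order-reversing involution), and let F = {x ∈ [0,1] : 0 < x}. Then: (i) F is a proper filter of [0,1], and for all a, b ∈ [0,1] with 1 − a ≤ b, a ∈ F or b ∈ F; (ii) the pair (F, F) is maximal among pairs of proper filters of [0,1]: any proper filters G⁺ ⊇ F and G⁻ ⊇ F of [0,1] satisfy G⁺ = G⁻ = F; (iii) nevertheless there exists a ∈ F with 1 − a ∈ F (for instance a = 1/2), so it is not the case that for every a ∈ [0,1], a ∈ F iff 1 − a ∉ F; hence this maximal pair of filters does not arise as the pair of complements of a prime d-ideal pair. -/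

import Mathlib

/-- A filter of a lattice: a nonempty, upward-closed subset closed under
binary meets. -/
def IsLatFilter {L : Type*} [Lattice L] (F : Set L) : Prop :=
  F.Nonempty ∧ (∀ x y : L, x ≤ y → x ∈ F → y ∈ F) ∧ (∀ x ∈ F, ∀ y ∈ F, x ⊓ y ∈ F)

/-- In the unit interval with `d a = 1 - a`, the set `F = {x | 0 < x}` is a
proper filter such that: `1 - a ≤ b` implies `a ∈ F` or `b ∈ F`; the pair
`(F, F)` is maximal among pairs of proper filters; yet there is `a ∈ F` with
`1 - a ∈ F`, so `(F, F)` is not the complement pair of a prime d-ideal pair. -/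
theorem maximal_d_filter_not_prime :
    (IsLatFilter {x : unitInterval | 0 < x} ∧
     {x : unitInterval | 0 < x} ≠ Set.univ ∧
     (∀ a b : unitInterval, unitInterval.symm a ≤ b →
       a ∈ {x : unitInterval | 0 < x} ∨ b ∈ {x : unitInterval | 0 < x})) ∧
    (∀ Gp Gm : Set unitInterval,
      IsLatFilter Gp → Gp ≠ Set.univ → IsLatFilter Gm → Gm ≠ Set.univ →
      {x : unitInterval | 0 < x} ⊆ Gp → {x : unitInterval | 0 < x} ⊆ Gm →
      Gp = {x : unitInterval | 0 < x} ∧ Gm = {x : unitInterval | 0 < x}) ∧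
    ((∃ a ∈ {x : unitInterval | 0 < x},
        unitInterval.symm a ∈ {x : unitInterval | 0 < x}) ∧
     ¬ ∀ a : unitInterval, a ∈ {x : unitInterval | 0 < x} ↔
        unitInterval.symm a ∉ {x : unitInterval | 0 < x}) := by
  have hle : ∀ a : unitInterval, (0 : unitInterval) ≤ a := fun a => a.2.1
  have hpos : ∀ a : unitInterval, (0 : unitInterval) < a ↔ a ≠ 0 := fun a =>
    ⟨fun h h0 => by simp [h0] at h, fun h => lt_of_le_of_ne (hle a) (Ne.symm h)⟩
  have hFilter : IsLatFilter {x : unitInterval | 0 < x} := by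
    refine ⟨⟨1, ?_⟩, ?_, ?_⟩
    · simp only [Set.mem_setOf_eq]; rw [hpos]; exact one_ne_zero
    · intro x y hxy hx; exact lt_of_lt_of_le hx hxy
    · intro x hx y hy; exact lt_min (show (0 : unitInterval) < x from hx) (show (0 : unitInterval) < y from hy)
  have hproper : {x : unitInterval | 0 < x} ≠ Set.univ := by
    intro h
    have : (0 : unitInterval) ∈ {x : unitInterval | 0 < x} := h ▸ Set.mem_univ _
    exact lt_irrefl _ (Set.mem_setOf_eq ▸ this)
  refine ⟨⟨hFilter, hproper, ?_⟩, ?_, ?_, ?_⟩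
  · intro a b hab
    by_cases ha : a = 0
    · right
      have : unitInterval.symm a = 1 := by simp [ha]
      rw [this] at hab
      have hb1 : b = 1 := le_antisymm b.2.2 hab
      simp only [Set.mem_setOf_eq, hb1, hpos]
      exact one_ne_zero
    · left; exact (hpos a).mpr ha
  · intro Gp Gm hGp hGpP hGm hGmP hsp hsm
    have key : ∀ (G : Set unitInterval), IsLatFilter G → G ≠ Set.univ →
        {x : unitInterval | 0 < x} ⊆ G → G = {x : unitInterval | 0 < x} := by
      intro G hG hGP hs
      apply Set.Subset.antisymm _ hs
      intro x hx
      rw [Set.mem_setOf_eq, hpos]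
      intro h0
      apply hGP
      ext y
      simp only [Set.mem_univ, iff_true]
      exact hG.2.1 x y (h0 ▸ hle y) hx
    exact ⟨key Gp hGp hGpP hsp, key Gm hGm hGmP hsm⟩
  · refine ⟨⟨1/2, by norm_num⟩, ?_, ?_⟩ <;>
    · simp only [Set.mem_setOf_eq, hpos, unitInterval.symm]
      intro h
      have := congrArg Subtype.val h
      norm_num at this
  · intro h
    have h2 := (h ⟨1/2, by norm_num⟩).mp
    have hmem : (⟨1/2, by norm_num⟩ : unitInterval) ∈ {x : unitInterval | 0 < x} := by
      rw [Set.mem_setOf_eq, hpos]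
      intro hh
      have := congrArg Subtype.val hh
      norm_num at this
    apply h2 hmem
    rw [Set.mem_setOf_eq, hpos]
    intro hh
    have := congrArg Subtype.val hh
    simp only [unitInterval.symm] at this
    norm_num at this
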